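/- Let ν be a compactly supported probability measure on ℝ, let θ ∈ ℝ, and let μ̂ be a probability measure on ℝ whose Stieltjes transform satisfies s_{μ̂}(z) = 1/(θ − s_ν(z) − z) for all z with Im z > 0. Suppose x₀ ∈ ℝ lies outside the support of ν and satisfies x₀ + s_ν(x₀) = θ. Then w'(x₀) := 1 + ∫_ℝ dν(λ)/(λ − x₀)² is strictly positive and μ̂({x₀}) = 1/w'(x₀). -/

import Mathlib

open MeasureTheory Filter

/-- The Stieltjes transform of a finite measure on `ℝ`. -/
noncomputable def stieltjesTransform (ν : Measure ℝ) (z : ℂ) : ℂ :=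
  ∫ x : ℝ, ((x : ℂ) - z)⁻¹ ∂ν

lemma integral_complex_re' {μ : Measure ℝ} {f : ℝ → ℂ} (h : Integrable f μ) :
    (∫ x, f x ∂μ).re = ∫ x, (f x).re ∂μ := by
  rw [← RCLike.re_eq_complex_re, ← integral_re h]

lemma integral_complex_im' {μ : Measure ℝ} {f : ℝ → ℂ} (h : Integrable f μ) :
    (∫ x, f x ∂μ).im = ∫ x, (f x).im ∂μ := by
  rw [← RCLike.im_eq_complex_im, ← integral_im h]

lemma stieltjes_integrand_integrable (μ : Measure ℝ) [IsProbabilityMeasure μ]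
    {z : ℂ} (hz : 0 < z.im) : Integrable (fun l : ℝ => ((l : ℂ) - z)⁻¹) μ := by
  refine (integrable_const (z.im)⁻¹).mono'
    ((Complex.measurable_ofReal.sub measurable_const).inv.aestronglyMeasurable) ?_
  refine Eventually.of_forall fun l => ?_
  rw [norm_inv]
  have h1 : z.im ≤ ‖(l : ℂ) - z‖ := by
    have := Complex.abs_im_le_norm ((l : ℂ) - z)
    simp only [Complex.sub_im, Complex.ofReal_im, zero_sub, abs_neg] at this
    calc z.im ≤ |z.im| := le_abs_self _
    _ ≤ _ := this
  exact inv_anti₀ hz h1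

lemma stieltjes_integrand_re_im (l x ε : ℝ) :
    (((l : ℂ) - ((x : ℂ) + (ε : ℂ) * Complex.I))⁻¹).re = (l - x) / ((l - x) ^ 2 + ε ^ 2) ∧
    (((l : ℂ) - ((x : ℂ) + (ε : ℂ) * Complex.I))⁻¹).im = ε / ((l - x) ^ 2 + ε ^ 2) := by
  have hre : ((l : ℂ) - ((x : ℂ) + (ε : ℂ) * Complex.I)).re = l - x := by simp
  have him : ((l : ℂ) - ((x : ℂ) + (ε : ℂ) * Complex.I)).im = -ε := by simp
  have hns : Complex.normSq ((l : ℂ) - ((x : ℂ) + (ε : ℂ) * Complex.I))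
      = (l - x) ^ 2 + ε ^ 2 := by
    rw [Complex.normSq_apply, hre, him]; ring
  constructor
  · rw [Complex.inv_re, hre, hns]
  · rw [Complex.inv_im, him, hns]; ring

lemma stieltjes_im (μ : Measure ℝ) [IsProbabilityMeasure μ] (x : ℝ) {ε : ℝ} (hε : 0 < ε) :
    (stieltjesTransform μ ((x : ℂ) + (ε : ℂ) * Complex.I)).im
      = ∫ l, ε / ((l - x) ^ 2 + ε ^ 2) ∂μ := by
  have hz : (0:ℝ) < ((x : ℂ) + (ε : ℂ) * Complex.I).im := by simpa using hε
  rw [stieltjesTransform, integral_complex_im' (stieltjes_integrand_integrable μ hz)]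
  exact integral_congr_ae (Eventually.of_forall fun l => (stieltjes_integrand_re_im l x ε).2)

lemma stieltjes_re (μ : Measure ℝ) [IsProbabilityMeasure μ] (x : ℝ) {ε : ℝ} (hε : 0 < ε) :
    (stieltjesTransform μ ((x : ℂ) + (ε : ℂ) * Complex.I)).re
      = ∫ l, (l - x) / ((l - x) ^ 2 + ε ^ 2) ∂μ := by
  have hz : (0:ℝ) < ((x : ℂ) + (ε : ℂ) * Complex.I).im := by simpa using hε
  rw [stieltjesTransform, integral_complex_re' (stieltjes_integrand_integrable μ hz)]
  exact integral_congr_ae (Eventually.of_forall fun l => (stieltjes_integrand_re_im l x ε).1)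

set_option maxHeartbeats 1200000 in
/-- Let `ν` be a compactly supported probability measure on `ℝ`, `θ ∈ ℝ`, and `μ̂` a
probability measure whose Stieltjes transform satisfies
`s_{μ̂}(z) = 1/(θ - s_ν(z) - z)` on the upper half-plane. If `x₀` lies outside the
support of `ν` and `x₀ + s_ν(x₀) = θ`, then `w'(x₀) = 1 + ∫ dν(λ)/(λ - x₀)² > 0`
and `μ̂({x₀}) = 1 / w'(x₀)`. -/
theorem atom_of_outlier (ν μhat : Measure ℝ)
    [IsProbabilityMeasure ν] [IsProbabilityMeasure μhat]
    (hνcpt : ∃ K : Set ℝ, IsCompact K ∧ ν Kᶜ = 0)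
    (θ x₀ : ℝ)
    (hout : ∃ ε > 0, ν (Metric.ball x₀ ε) = 0)
    (hst : ∀ z : ℂ, 0 < z.im →
      stieltjesTransform μhat z = ((θ : ℂ) - stieltjesTransform ν z - z)⁻¹)
    (hfix : x₀ + ∫ l, (l - x₀)⁻¹ ∂ν = θ) :
    0 < 1 + ∫ l, ((l - x₀) ^ 2)⁻¹ ∂ν ∧
      μhat {x₀} = ENNReal.ofReal (1 / (1 + ∫ l, ((l - x₀) ^ 2)⁻¹ ∂ν)) := by
  obtain ⟨δ, hδ, hν0⟩ := hout
  have haeν : ∀ᵐ l ∂ν, δ ≤ |l - x₀| := by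
    rw [ae_iff]
    refine measure_mono_null (fun l hl => ?_) hν0
    simp only [Set.mem_setOf_eq, not_le] at hl
    simpa [Metric.mem_ball, Real.dist_eq, abs_sub_comm] using hl
  have hJ0 : 0 ≤ ∫ l, ((l - x₀) ^ 2)⁻¹ ∂ν := integral_nonneg fun l => by positivity
  set J := ∫ l, ((l - x₀) ^ 2)⁻¹ ∂ν with hJdef
  have hw' : 0 < 1 + J := by linarith
  refine ⟨hw', ?_⟩
  -- generic integrability from a.e. bound
  have hgen : ∀ (f : ℝ → ℝ) (C : ℝ), Measurable f → (∀ᵐ l ∂ν, |f l| ≤ C) →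
      Integrable f ν := fun f C hm hb =>
    (integrable_const C).mono' hm.aestronglyMeasurable (by simpa [Real.norm_eq_abs] using hb)
  set I₂ : ℝ → ℝ := fun ε => ∫ l, (((l - x₀) ^ 2 + ε ^ 2))⁻¹ ∂ν with hI₂def
  set K : ℝ → ℝ := fun ε => ∫ l, ((l - x₀) * ((l - x₀) ^ 2 + ε ^ 2))⁻¹ ∂ν with hKdef
  set F : ℝ → ℝ := fun ε => ∫ m, ε ^ 2 / ((m - x₀) ^ 2 + ε ^ 2) ∂μhat with hFdef
  -- a.e. bounds
  have hb2 : ∀ ε : ℝ, ∀ᵐ l ∂ν, |(((l - x₀) ^ 2 + ε ^ 2))⁻¹| ≤ (δ ^ 2)⁻¹ := fun ε =>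
    haeν.mono fun l hl => by
      have h1 : δ ^ 2 ≤ (l - x₀) ^ 2 + ε ^ 2 := by nlinarith [sq_abs (l - x₀), sq_nonneg ε]
      rw [abs_of_nonneg (by positivity)]
      exact inv_anti₀ (by positivity) h1
  have hbK : ∀ ε : ℝ, ∀ᵐ l ∂ν, |((l - x₀) * ((l - x₀) ^ 2 + ε ^ 2))⁻¹| ≤ (δ ^ 3)⁻¹ := fun ε =>
    haeν.mono fun l hl => by
      rw [abs_inv]
      refine inv_anti₀ (by positivity) ?_
      rw [abs_mul, abs_of_nonneg (by positivity : (0:ℝ) ≤ (l - x₀) ^ 2 + ε ^ 2)]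
      have h1 : δ ^ 2 ≤ (l - x₀) ^ 2 + ε ^ 2 := by nlinarith [sq_abs (l - x₀), sq_nonneg ε]
      calc δ ^ 3 = δ * δ ^ 2 := by ring
        _ ≤ |l - x₀| * ((l - x₀) ^ 2 + ε ^ 2) :=
            mul_le_mul hl h1 (by positivity) (abs_nonneg _)
  have hb1 : ∀ ε : ℝ, ∀ᵐ l ∂ν, |(l - x₀) / ((l - x₀) ^ 2 + ε ^ 2)| ≤ δ⁻¹ := fun ε =>
    haeν.mono fun l hl => by
      have hd : (0:ℝ) < (l - x₀) ^ 2 + ε ^ 2 := by nlinarith [sq_abs (l - x₀), sq_nonneg ε]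
      rw [abs_div, abs_of_pos hd, div_le_iff₀ hd]
      have h2 : δ * |l - x₀| ≤ (l - x₀) ^ 2 + ε ^ 2 := by
        nlinarith [sq_abs (l - x₀), sq_nonneg ε, abs_nonneg (l - x₀)]
      calc |l - x₀| = δ⁻¹ * (δ * |l - x₀|) := by field_simp
        _ ≤ δ⁻¹ * ((l - x₀) ^ 2 + ε ^ 2) :=
            mul_le_mul_of_nonneg_left h2 (by positivity)
  have hb0 : ∀ᵐ l ∂ν, |(l - x₀)⁻¹| ≤ δ⁻¹ := haeν.mono fun l hl => by
    rw [abs_inv]; exact inv_anti₀ hδ hl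
  -- integrability
  have hint2 : ∀ ε : ℝ, Integrable (fun l => (((l - x₀) ^ 2 + ε ^ 2))⁻¹) ν := fun ε =>
    hgen _ _ (by fun_prop) (hb2 ε)
  have hintK : ∀ ε : ℝ, Integrable (fun l => ((l - x₀) * ((l - x₀) ^ 2 + ε ^ 2))⁻¹) ν := fun ε =>
    hgen _ _ (by fun_prop) (hbK ε)
  have hint1 : ∀ ε : ℝ, Integrable (fun l => (l - x₀) / ((l - x₀) ^ 2 + ε ^ 2)) ν := fun ε =>
    hgen _ _ (by fun_prop) (hb1 ε)
  have hint0 : Integrable (fun l => (l - x₀)⁻¹) ν := hgen _ _ (by fun_prop) hb0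
  -- positivity of I₂
  have hI₂nonneg : ∀ ε : ℝ, 0 ≤ I₂ ε := fun ε => integral_nonneg fun l => by positivity
  -- the key identity
  have hkey : ∀ ε : ℝ, 0 < ε →
      F ε = (1 + I₂ ε) / (ε ^ 2 * K ε ^ 2 + (1 + I₂ ε) ^ 2) := by
    intro ε hε
    set z : ℂ := (x₀ : ℂ) + (ε : ℂ) * Complex.I with hzdef
    have hzim : 0 < z.im := by simp [hzdef, hε]
    -- S
    have hS_im : (stieltjesTransform ν z).im = ε * I₂ ε := by
      have hIε : I₂ ε = ∫ l, (((l - x₀) ^ 2 + ε ^ 2))⁻¹ ∂ν := rfl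
      rw [hzdef, stieltjes_im ν x₀ hε, hIε, ← integral_const_mul]
      exact integral_congr_ae (Eventually.of_forall fun l => by ring)
    have hS_re : (stieltjesTransform ν z).re = ∫ l, (l - x₀) / ((l - x₀) ^ 2 + ε ^ 2) ∂ν := by
      rw [hzdef]; exact stieltjes_re ν x₀ hε
    -- D
    have hDim : ((θ : ℂ) - stieltjesTransform ν z - z).im = -(ε * (1 + I₂ ε)) := by
      simp only [Complex.sub_im, Complex.ofReal_im, hS_im, hzdef, Complex.add_im,
        Complex.mul_im, Complex.I_im, Complex.I_re, Complex.ofReal_re]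
      rw [← hzdef, hS_im]
      ring
    have hDre : ((θ : ℂ) - stieltjesTransform ν z - z).re = ε ^ 2 * K ε := by
      have hzre : z.re = x₀ := by simp [hzdef]
      have hsub : ∫ l, ((l - x₀)⁻¹ - (l - x₀) / ((l - x₀) ^ 2 + ε ^ 2)) ∂ν
          = ε ^ 2 * K ε := by
        have hcong : ∀ᵐ l ∂ν, (l - x₀)⁻¹ - (l - x₀) / ((l - x₀) ^ 2 + ε ^ 2)
            = ε ^ 2 * ((l - x₀) * ((l - x₀) ^ 2 + ε ^ 2))⁻¹ := haeν.mono fun l hl => by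
          have hu : l - x₀ ≠ 0 := by
            intro h; rw [h] at hl; simp at hl; linarith
          have hd : (l - x₀) ^ 2 + ε ^ 2 ≠ 0 := by positivity
          field_simp
          ring
        have hKε : K ε = ∫ l, ((l - x₀) * ((l - x₀) ^ 2 + ε ^ 2))⁻¹ ∂ν := rfl
        rw [integral_congr_ae hcong, integral_const_mul, hKε]
      have h1 : (∫ l, (l - x₀)⁻¹ ∂ν) - (∫ l, (l - x₀) / ((l - x₀) ^ 2 + ε ^ 2) ∂ν)
          = ε ^ 2 * K ε := by
        rw [← integral_sub hint0 (hint1 ε)]; exact hsub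
      simp only [Complex.sub_re, Complex.ofReal_re, hS_re, hzre]
      linarith [h1, hfix]
    -- μhat side
    have hμ : F ε = ε * (stieltjesTransform μhat z).im := by
      have hFε : F ε = ∫ m, ε ^ 2 / ((m - x₀) ^ 2 + ε ^ 2) ∂μhat := rfl
      rw [hzdef, stieltjes_im μhat x₀ hε, hFε, ← integral_const_mul]
      exact integral_congr_ae (Eventually.of_forall fun m => by ring)
    rw [hμ, hst z hzim, Complex.inv_im, Complex.normSq_apply, hDim, hDre]
    have hA : 0 < 1 + I₂ ε := by linarith [hI₂nonneg ε]
    have hden2 : 0 < ε ^ 2 * K ε ^ 2 + (1 + I₂ ε) ^ 2 :=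
      add_pos_of_nonneg_of_pos (by positivity) (pow_pos hA 2)
    have hden : (0:ℝ) < (ε ^ 2 * K ε) * (ε ^ 2 * K ε) + (-(ε * (1 + I₂ ε))) * (-(ε * (1 + I₂ ε))) := by
      have h1 : (0:ℝ) < (ε * (1 + I₂ ε)) * (ε * (1 + I₂ ε)) :=
        mul_pos (mul_pos hε hA) (mul_pos hε hA)
      nlinarith [mul_self_nonneg (ε ^ 2 * K ε)]
    rw [← mul_div_assoc, div_eq_div_iff hden.ne' hden2.ne']
    ring
  -- limit of I₂ along 0+
  have hI₂tendsto : Tendsto I₂ (nhdsWithin 0 (Set.Ioi 0)) (nhds J) := by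
    rw [hJdef, hI₂def]
    refine tendsto_integral_filter_of_dominated_convergence (fun _ => (δ ^ 2)⁻¹)
      (Eventually.of_forall fun ε => (by fun_prop : Measurable fun l : ℝ => (((l - x₀) ^ 2 + ε ^ 2))⁻¹).aestronglyMeasurable)
      (Eventually.of_forall fun ε => (hb2 ε).mono fun l h => by
        rw [Real.norm_eq_abs]; exact h)
      (integrable_const _) ?_
    refine haeν.mono fun l hl => ?_
    have hu : l - x₀ ≠ 0 := by intro h; rw [h] at hl; simp at hl; linarith
    have hc : ContinuousAt (fun ε : ℝ => (((l - x₀) ^ 2 + ε ^ 2))⁻¹) 0 := by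
      refine ContinuousAt.inv₀ (by fun_prop) ?_
      simpa using pow_ne_zero 2 hu
    have h5 : Tendsto (fun ε : ℝ => (((l - x₀) ^ 2 + ε ^ 2))⁻¹) (nhdsWithin 0 (Set.Ioi 0))
        (nhds (((l - x₀) ^ 2 + 0 ^ 2)⁻¹)) := hc.tendsto.mono_left nhdsWithin_le_nhds
    simpa using h5
  -- bound on K
  have hKbound : ∀ ε : ℝ, |K ε| ≤ (δ ^ 3)⁻¹ := fun ε => by
    have h := norm_integral_le_of_norm_le (μ := ν)
      (f := fun l => ((l - x₀) * ((l - x₀) ^ 2 + ε ^ 2))⁻¹)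
      (integrable_const ((δ ^ 3)⁻¹))
      ((hbK ε).mono fun l h => by rw [Real.norm_eq_abs]; exact h)
    rw [integral_const, show ν.real Set.univ = 1 by simp, one_smul, Real.norm_eq_abs] at h
    exact h
  -- ε² K² → 0
  have hKsq : Tendsto (fun ε : ℝ => ε ^ 2 * K ε ^ 2) (nhdsWithin 0 (Set.Ioi 0)) (nhds 0) := by
    refine squeeze_zero (g := fun ε => ε ^ 2 * ((δ ^ 3)⁻¹) ^ 2) (fun ε => by positivity) (fun ε => ?_) ?_
    · refine mul_le_mul_of_nonneg_left ?_ (sq_nonneg ε)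
      have := hKbound ε
      nlinarith [abs_nonneg (K ε), sq_abs (K ε)]
    · have hc : ContinuousAt (fun ε : ℝ => ε ^ 2 * ((δ ^ 3)⁻¹) ^ 2) 0 := by fun_prop
      have h5 : Tendsto (fun ε : ℝ => ε ^ 2 * ((δ ^ 3)⁻¹) ^ 2) (nhdsWithin 0 (Set.Ioi 0))
          (nhds (0 ^ 2 * ((δ ^ 3)⁻¹) ^ 2)) := hc.tendsto.mono_left nhdsWithin_le_nhds
      simpa using h5
  -- limit of right side
  have hG : Tendsto (fun ε : ℝ => (1 + I₂ ε) / (ε ^ 2 * K ε ^ 2 + (1 + I₂ ε) ^ 2))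
      (nhdsWithin 0 (Set.Ioi 0)) (nhds (1 / (1 + J))) := by
    have h1 : Tendsto (fun ε : ℝ => 1 + I₂ ε) (nhdsWithin 0 (Set.Ioi 0)) (nhds (1 + J)) :=
      tendsto_const_nhds.add hI₂tendsto
    have h2 : Tendsto (fun ε : ℝ => ε ^ 2 * K ε ^ 2 + (1 + I₂ ε) ^ 2)
        (nhdsWithin 0 (Set.Ioi 0)) (nhds (0 + (1 + J) ^ 2)) := hKsq.add (h1.pow 2)
    have h3 := h1.div h2 (by positivity)
    have hval : (1 + J) / (0 + (1 + J) ^ 2) = 1 / (1 + J) := by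
      rw [zero_add, pow_two]
      field_simp
    rwa [hval] at h3
  -- F tends to μhat {x₀}
  have hFμ : Tendsto F (nhdsWithin 0 (Set.Ioi 0)) (nhds ((μhat {x₀}).toReal)) := by
    have hind : (μhat {x₀}).toReal = ∫ m, Set.indicator {x₀} 1 m ∂μhat :=
      (integral_indicator_one (measurableSet_singleton x₀)).symm
    rw [hind, hFdef]
    refine tendsto_integral_filter_of_dominated_convergence (fun _ => (1:ℝ))
      (Eventually.of_forall fun ε => (by fun_prop : Measurable fun m : ℝ => ε ^ 2 / ((m - x₀) ^ 2 + ε ^ 2)).aestronglyMeasurable)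
      ?_ (integrable_const _) ?_
    · refine eventually_of_mem self_mem_nhdsWithin fun ε hε => Eventually.of_forall fun m => ?_
      have hε' : 0 < ε := hε
      have hd : (0:ℝ) < (m - x₀) ^ 2 + ε ^ 2 := by positivity
      rw [Real.norm_eq_abs, abs_of_nonneg (by positivity), div_le_one hd]
      nlinarith [sq_nonneg (m - x₀)]
    · refine Eventually.of_forall fun m => ?_
      by_cases hm : m = x₀
      · subst hm
        have heq : ∀ᶠ ε : ℝ in nhdsWithin 0 (Set.Ioi 0),
            (1:ℝ) = ε ^ 2 / ((m - m) ^ 2 + ε ^ 2) := by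
          refine eventually_of_mem self_mem_nhdsWithin fun ε hε => ?_
          have hε' : (0:ℝ) < ε := hε
          rw [sub_self, eq_comm]
          rw [show (0:ℝ) ^ 2 + ε ^ 2 = ε ^ 2 by ring]
          exact div_self (by positivity)
        have : Set.indicator {m} (1 : ℝ → ℝ) m = 1 := Set.indicator_of_mem rfl _
        rw [this]
        exact Tendsto.congr' heq tendsto_const_nhds
      · have hu : m - x₀ ≠ 0 := sub_ne_zero.mpr hm
        have hc : ContinuousAt (fun ε : ℝ => ε ^ 2 / ((m - x₀) ^ 2 + ε ^ 2)) 0 := by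
          refine ContinuousAt.div (by fun_prop) (by fun_prop) ?_
          simpa using pow_ne_zero 2 hu
        have h0 : Set.indicator {x₀} (1 : ℝ → ℝ) m = 0 :=
          Set.indicator_of_notMem (by simpa using hm) _
        rw [h0]
        have h5 : Tendsto (fun ε : ℝ => ε ^ 2 / ((m - x₀) ^ 2 + ε ^ 2)) (nhdsWithin 0 (Set.Ioi 0))
            (nhds (0 ^ 2 / ((m - x₀) ^ 2 + 0 ^ 2))) := hc.tendsto.mono_left nhdsWithin_le_nhds
        simpa using h5
  -- conclude
  have hFG : Tendsto F (nhdsWithin 0 (Set.Ioi 0)) (nhds (1 / (1 + J))) := by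
    refine Tendsto.congr' ?_ hG
    exact eventually_of_mem self_mem_nhdsWithin fun ε hε => (hkey ε hε).symm
  have heq : (μhat {x₀}).toReal = 1 / (1 + J) := tendsto_nhds_unique hFμ hFG
  rw [← heq, ENNReal.ofReal_toReal (measure_ne_top μhat _)]
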